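/- Let a,b,c,d,e,f,g,h,i,j,k,l,m,n,p,q,r,s be 18 complex numbers such that (fs−ip)·(gr−hq)·F(l,−c)·F(μ,−λ) ≠ 0. Then the vectors v₁, v₂, v₃, v₄ are linearly independent over ℂ, and consequently the matrix σ = Σ_{t=1}^4 v_t v_t† has rank exactly 4. -/

import Mathlib

open Complex ComplexConjugate
open scoped ComplexOrder

noncomputable section

/-- The "odd" checkerboard vector with entries at positions (0,0),(2,0),(1,1),(0,2),(2,2). -/
def oddVec (a b c d e : ℂ) : Fin 3 × Fin 3 → ℂ := fun u =>
  if u = (0, 0) then a else if u = (2, 0) then b else if u = (1, 1) then c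
  else if u = (0, 2) then d else if u = (2, 2) then e else 0

/-- The "even" checkerboard vector with entries at positions (1,0),(0,1),(2,1),(1,2). -/
def evenVec (f g h i : ℂ) : Fin 3 × Fin 3 → ℂ := fun u =>
  if u = (1, 0) then f else if u = (0, 1) then g else if u = (2, 1) then h
  else if u = (1, 2) then i else 0

/-- Tensor product of two vectors of ℂ³, as a function on Fin 3 × Fin 3. -/
def tp (x y : Fin 3 → ℂ) : Fin 3 × Fin 3 → ℂ := fun u => x u.1 * y u.2

/-- The binary quadratic form F(u,w) = (ae−bd)u² + (an+ej−bm−dk)uw + (jn−km)w². -/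
def Fquad (a b d e j k m n : ℂ) (u w : ℂ) : ℂ :=
  (a * e - b * d) * u ^ 2 + (a * n + e * j - b * m - d * k) * u * w + (j * n - k * m) * w ^ 2

/-- λ = a(hs−ir)+b(iq−gs)+d(fr−hp)+e(gp−fq). -/
def lamP (a b d e f g h i p q r s : ℂ) : ℂ :=
  a * (h * s - i * r) + b * (i * q - g * s) + d * (f * r - h * p) + e * (g * p - f * q)

/-- μ = f(mr−nq)+g(np−ks)+h(js−mp)+i(kq−jr). -/
def muP (f g h i j k m n p q r s : ℂ) : ℂ :=
  f * (m * r - n * q) + g * (n * p - k * s) + h * (j * s - m * p) + i * (k * q - j * r)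

/-- σ = Σ_{t=1}^4 v_t v_t†, a 9×9 complex matrix. -/
def sigmaM (a b c d e f g h i j k l m n p q r s : ℂ) :
    Matrix (Fin 3 × Fin 3) (Fin 3 × Fin 3) ℂ :=
  Matrix.of fun u w =>
    oddVec a b c d e u * conj (oddVec a b c d e w)
      + evenVec f g h i u * conj (evenVec f g h i w)
      + oddVec j k l m n u * conj (oddVec j k l m n w)
      + evenVec p q r s u * conj (evenVec p q r s w)

theorem stmt8 (a b c d e f g h i j k l m n p q r s : ℂ)
    (hcond : (f * s - i * p) * (g * r - h * q) * Fquad a b d e j k m n l (-c) *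
      Fquad a b d e j k m n (muP f g h i j k m n p q r s)
        (-(lamP a b d e f g h i p q r s)) ≠ 0) :
    LinearIndependent ℂ
      ![oddVec a b c d e, evenVec f g h i, oddVec j k l m n, evenVec p q r s] ∧
    (sigmaM a b c d e f g h i j k l m n p q r s).rank = 4 := by
  have hfs : f * s - i * p ≠ 0 :=
    left_ne_zero_of_mul (left_ne_zero_of_mul (left_ne_zero_of_mul hcond))
  have hF : Fquad a b d e j k m n l (-c) ≠ 0 :=
    right_ne_zero_of_mul (left_ne_zero_of_mul hcond)
  have hli : LinearIndependent ℂ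
      ![oddVec a b c d e, evenVec f g h i, oddVec j k l m n, evenVec p q r s] := by
    rw [Fintype.linearIndependent_iff]
    intro z hz
    have ev : ∀ u : Fin 3 × Fin 3,
        z 0 * oddVec a b c d e u + z 1 * evenVec f g h i u + z 2 * oddVec j k l m n u
          + z 3 * evenVec p q r s u = 0 := by
      intro u
      have := congrFun hz u
      simpa [Fin.sum_univ_four, Pi.smul_apply, smul_eq_mul] using this
    have E1 := ev (0,0); have E2 := ev (2,0); have E3 := ev (1,1)
    have E4 := ev (0,2); have E5 := ev (2,2)
    have O1 := ev (1,0); have O2 := ev (0,1); have O3 := ev (2,1); have O4 := ev (1,2)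
    simp only [oddVec, evenVec] at E1 E2 E3 E4 E5 O1 O2 O3 O4
    norm_num [Prod.ext_iff, Fin.ext_iff] at E1 E2 E3 E4 E5 O1 O2 O3 O4
    have hz1 : z 1 = 0 := by
      have : z 1 * (f * s - i * p) = 0 := by linear_combination s * O1 - p * O4
      exact (mul_eq_zero.mp this).resolve_right hfs
    have hz3 : z 3 = 0 := by
      have : z 3 * (f * s - i * p) = 0 := by linear_combination f * O4 - i * O1
      exact (mul_eq_zero.mp this).resolve_right hfs
    have hA : z 0 * (a * l - c * j) = 0 := by linear_combination l * E1 - j * E3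
    have hB : z 0 * (b * l - c * k) = 0 := by linear_combination l * E2 - k * E3
    have hz0 : z 0 = 0 := by
      have h2 : z 0 ^ 2 * Fquad a b d e j k m n l (-c) = 0 := by
        simp only [Fquad]
        linear_combination (z 0 * (e * l - c * n)) * hA - (z 0 * (d * l - c * m)) * hB
      have := (mul_eq_zero.mp h2).resolve_right hF
      exact pow_eq_zero_iff (two_ne_zero) |>.mp this
    have hA2 : z 2 * (a * l - c * j) = 0 := by linear_combination a * E3 - c * E1
    have hB2 : z 2 * (b * l - c * k) = 0 := by linear_combination b * E3 - c * E2
    have hz2 : z 2 = 0 := by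
      have h2 : z 2 ^ 2 * Fquad a b d e j k m n l (-c) = 0 := by
        simp only [Fquad]
        linear_combination (z 2 * (e * l - c * n)) * hA2 - (z 2 * (d * l - c * m)) * hB2
      have := (mul_eq_zero.mp h2).resolve_right hF
      exact pow_eq_zero_iff (two_ne_zero) |>.mp this
    intro t
    fin_cases t <;> assumption
  refine ⟨hli, ?_⟩
  set v : Fin 4 → (Fin 3 × Fin 3 → ℂ) :=
    ![oddVec a b c d e, evenVec f g h i, oddVec j k l m n, evenVec p q r s] with hv
  set M : Matrix (Fin 3 × Fin 3) (Fin 4) ℂ := Matrix.of fun u t => v t u with hM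
  have hMM : sigmaM a b c d e f g h i j k l m n p q r s = M * M.conjTranspose := by
    ext u w
    simp [sigmaM, Matrix.mul_apply, hM, hv, Matrix.conjTranspose_apply, Fin.sum_univ_four]
  rw [hMM, Matrix.rank_self_mul_conjTranspose, Matrix.rank_eq_finrank_span_cols]
  have hr : Set.range M.col = Set.range v := by
    ext x; constructor
    · rintro ⟨t, rfl⟩; exact ⟨t, rfl⟩
    · rintro ⟨t, rfl⟩; exact ⟨t, rfl⟩
  rw [hr, finrank_span_eq_card hli, Fintype.card_fin]
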